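/- Let f ∈ H¹(ℝ; ℂ) and λ ∈ ℝ, k ≥ 1 an integer. Then |f(0)|² (1+λ²)^{k−1/2} ≤ C(k) ( ‖f‖²_{L²(ℝ)} + ‖f^{(k)}‖²_{L²(ℝ)} + λ^{2k} ‖f‖²_{L²(ℝ)} ), where C(k) depends only on k and f^{(k)} denotes the k-th derivative (assumed to exist in L²). -/

import Mathlib

open MeasureTheory

open Set Filter Topology Nat
open scoped ContDiff ENNReal

lemma tendsto_atTop_zero_of_hcs {F : ℝ → ℂ} (h : HasCompactSupport F) :
    Tendsto F atTop (𝓝 0) :=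
  h.is_zero_at_infty.mono_left atTop_le_cocompact

lemma ibp_Ioi (g : ℝ → ℝ) (u : ℝ → ℂ) (hg : ContDiff ℝ ∞ g)
    (hgs : HasCompactSupport g) (hu : ContDiff ℝ 1 u) :
    ∫ x in Ioi (0:ℝ), (g x • deriv u x + deriv g x • u x) = - (g 0 • u 0) := by
  have hgd : Continuous (deriv g) := (contDiff_infty_iff_deriv.mp hg).2.continuous
  have hud : Continuous (deriv u) := hu.continuous_deriv le_rfl
  have hderiv : ∀ x ∈ Ioi (0:ℝ), HasDerivAt (fun y => g y • u y)
      (g x • deriv u x + deriv g x • u x) x := by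
    intro x _
    exact ((hg.differentiable (by simp) x).hasDerivAt).smul
      ((hu.differentiable one_ne_zero x).hasDerivAt)
  have hcont : Continuous (fun y => g y • u y) := hg.continuous.smul hu.continuous
  have hint : Integrable (fun x => g x • deriv u x + deriv g x • u x) := by
    apply Continuous.integrable_of_hasCompactSupport
    · exact (hg.continuous.smul hud).add (hgd.smul hu.continuous)
    · exact (hgs.smul_right).add (hgs.deriv.smul_right)
  have htend : Tendsto (fun y => g y • u y) atTop (𝓝 0) :=
    tendsto_atTop_zero_of_hcs hgs.smul_right
  have := integral_Ioi_of_hasDerivAt_of_tendsto (a := 0)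
    hcont.continuousWithinAt hderiv hint.integrableOn htend
  simpa using this

lemma hcs_neg {h : ℝ → ℝ} (hhs : HasCompactSupport h) :
    HasCompactSupport (fun x => -h x) := by
  rw [HasCompactSupport, tsupport] at *
  rwa [show (Function.support fun x => -h x) = Function.support h by
    ext x; simp [Function.support]]

lemma shift_derivs (j : ℕ) :
    ∀ g : ℝ → ℝ, ContDiff ℝ ∞ g → HasCompactSupport g → (∀ x ∈ Ioo (-1:ℝ) 1, g x = 0) →
    ∃ h : ℝ → ℝ, ContDiff ℝ ∞ h ∧ HasCompactSupport h ∧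
      ∀ u : ℝ → ℂ, ContDiff ℝ (j : ℕ∞) u →
        ∫ x in Ioi (0:ℝ), g x • iteratedDeriv j u x = ∫ x in Ioi (0:ℝ), h x • u x := by
  induction j with
  | zero =>
    intro g hg hgs _
    exact ⟨g, hg, hgs, fun u _ => by simp [iteratedDeriv_zero]⟩
  | succ j ih =>
    intro g hg hgs hg0
    have hgd : ContDiff ℝ ∞ (deriv g) := (contDiff_infty_iff_deriv.mp hg).2
    have hgds : HasCompactSupport (deriv g) := hgs.deriv
    have hgd0 : ∀ x ∈ Ioo (-1:ℝ) 1, deriv g x = 0 := by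
      intro x hx
      have hev : g =ᶠ[𝓝 x] (fun _ => (0:ℝ)) := by
        filter_upwards [isOpen_Ioo.mem_nhds hx] with y hy using hg0 y hy
      rw [hev.deriv_eq]; simp
    obtain ⟨h, hh, hhs, hhu⟩ := ih (deriv g) hgd hgds hgd0
    refine ⟨fun x => -h x, hh.neg, hcs_neg hhs, fun u hu => ?_⟩
    have hudc : Continuous (iteratedDeriv j u) :=
      hu.continuous_iteratedDeriv j (by exact_mod_cast by omega)
    have hudc' : Continuous (iteratedDeriv (j+1) u) :=
      hu.continuous_iteratedDeriv (j+1) (by exact_mod_cast le_rfl)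
    have hu1 : ContDiff ℝ 1 (iteratedDeriv j u) := by
      rw [contDiff_one_iff_deriv]
      refine ⟨hu.differentiable_iteratedDeriv j (by exact_mod_cast j.lt_succ_self), ?_⟩
      rw [← iteratedDeriv_succ]; exact hudc'
    have hibp := ibp_Ioi g (iteratedDeriv j u) hg hgs hu1
    rw [hg0 0 (by norm_num), zero_smul, neg_zero] at hibp
    have hI1 : Integrable (fun x => g x • deriv (iteratedDeriv j u) x) := by
      apply Continuous.integrable_of_hasCompactSupport
      · simp_rw [← iteratedDeriv_succ]; exact hg.continuous.smul hudc'
      · exact hgs.smul_right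
    have hI2 : Integrable (fun x => deriv g x • iteratedDeriv j u x) := by
      apply Continuous.integrable_of_hasCompactSupport
      · exact hgd.continuous.smul hudc
      · exact hgds.smul_right
    rw [integral_add hI1.integrableOn hI2.integrableOn] at hibp
    have hju : ContDiff ℝ (j : ℕ∞) u := hu.of_le (by exact_mod_cast by omega)
    calc ∫ x in Ioi (0:ℝ), g x • iteratedDeriv (j+1) u x
        = ∫ x in Ioi (0:ℝ), g x • deriv (iteratedDeriv j u) x := by
          simp_rw [iteratedDeriv_succ]
      _ = - ∫ x in Ioi (0:ℝ), deriv g x • iteratedDeriv j u x := by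
          rw [eq_neg_iff_add_eq_zero]; exact hibp
      _ = - ∫ x in Ioi (0:ℝ), h x • u x := by rw [hhu u hju]
      _ = ∫ x in Ioi (0:ℝ), (fun x => -h x) x • u x := by
          rw [← integral_neg]; simp [neg_smul]

/-- split version of ibp for iterated derivatives -/
lemma ibp_split (g : ℝ → ℝ) (u : ℝ → ℂ) (j : ℕ) (hg : ContDiff ℝ ∞ g)
    (hgs : HasCompactSupport g) (hu : ContDiff ℝ ((j+1 : ℕ) : ℕ∞) u) :
    ∫ x in Ioi (0:ℝ), g x • iteratedDeriv (j+1) u x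
      = - (g 0 • iteratedDeriv j u 0) - ∫ x in Ioi (0:ℝ), deriv g x • iteratedDeriv j u x := by
  have hgd : ContDiff ℝ ∞ (deriv g) := (contDiff_infty_iff_deriv.mp hg).2
  have hudc : Continuous (iteratedDeriv j u) :=
    hu.continuous_iteratedDeriv j (by exact_mod_cast by omega)
  have hudc' : Continuous (iteratedDeriv (j+1) u) :=
    hu.continuous_iteratedDeriv (j+1) (by exact_mod_cast le_rfl)
  have hu1 : ContDiff ℝ 1 (iteratedDeriv j u) := by
    rw [contDiff_one_iff_deriv]
    refine ⟨hu.differentiable_iteratedDeriv j (by exact_mod_cast j.lt_succ_self), ?_⟩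
    rw [← iteratedDeriv_succ]; exact hudc'
  have hibp := ibp_Ioi g (iteratedDeriv j u) hg hgs hu1
  have hI1 : Integrable (fun x => g x • deriv (iteratedDeriv j u) x) := by
    apply Continuous.integrable_of_hasCompactSupport
    · simp_rw [← iteratedDeriv_succ]; exact hg.continuous.smul hudc'
    · exact hgs.smul_right
  have hI2 : Integrable (fun x => deriv g x • iteratedDeriv j u x) := by
    apply Continuous.integrable_of_hasCompactSupport
    · exact hgd.continuous.smul hudc
    · exact hgs.deriv.smul_right
  rw [integral_add hI1.integrableOn hI2.integrableOn] at hibp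
  rw [iteratedDeriv_succ]
  linear_combination (norm := module) hibp

noncomputable def tbump : ContDiffBump (0:ℝ) := ⟨1, 2, one_pos, one_lt_two⟩

noncomputable def gker (k : ℕ) : ℝ → ℝ := fun x => x ^ (k-1) / (k-1)! * tbump x

lemma poly_smooth (m : ℕ) (c : ℝ) : ContDiff ℝ ∞ (fun x : ℝ => x ^ m / c) :=
  ((contDiff_id.pow m).div_const c : ContDiff ℝ ∞ fun x : ℝ => id x ^ m / c)

lemma gker_smooth (k : ℕ) : ContDiff ℝ ∞ (gker k) :=
  (poly_smooth (k-1) _).mul tbump.contDiff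

lemma gker_hcs (k : ℕ) : HasCompactSupport (gker k) :=
  HasCompactSupport.mul_left (f := fun x : ℝ => x ^ (k-1) / (k-1)!) tbump.hasCompactSupport

lemma tbump_one : tbump 0 = 1 :=
  tbump.one_of_mem_closedBall (by simp [tbump])

lemma tbump_deriv_zero {x : ℝ} (hx : x ∈ Ioo (-1:ℝ) 1) : deriv (⇑tbump) x = 0 := by
  have hev : (⇑tbump) =ᶠ[𝓝 x] (fun _ => (1:ℝ)) := by
    apply tbump.eventuallyEq_one_of_mem_ball
    simp only [tbump, Metric.mem_ball, Real.dist_eq, sub_zero]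
    rw [abs_lt]; exact ⟨hx.1, hx.2⟩
  rw [hev.deriv_eq]; simp

lemma gker_deriv (k : ℕ) (hk : 1 ≤ k) (x : ℝ) :
    deriv (gker (k+1)) x = gker k x + x ^ k / (k ! : ℝ) * deriv (⇑tbump) x := by
  have hb : HasDerivAt (⇑tbump) (deriv (⇑tbump) x) x :=
    ((tbump.contDiff (n := 1)).differentiable (by simp) x).hasDerivAt
  have hp : HasDerivAt (fun y : ℝ => y ^ ((k+1)-1) / (((k+1)-1)! : ℝ))
      ((k:ℝ) * x ^ (k-1) / (k ! : ℝ)) x := by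
    simpa using (hasDerivAt_pow ((k+1)-1) x).div_const ((((k+1)-1)! : ℕ) : ℝ)
  have hd := (hp.mul hb).deriv
  rw [show (fun y : ℝ => y ^ ((k+1)-1) / (((k+1)-1)! : ℝ)) * ⇑tbump = gker (k+1) from rfl] at hd
  rw [hd, gker]
  have hfac : (k:ℝ) * ((k-1)! : ℝ) = (k ! : ℝ) := by
    exact_mod_cast Nat.mul_factorial_pred (by omega)
  have hk0 : (k:ℝ) ≠ 0 := by positivity
  have hfk : (((k-1)!) : ℝ) ≠ 0 := by positivity
  have harith : (k:ℝ) * x ^ (k-1) / (k ! : ℝ) = x ^ (k-1) / ((k-1)! : ℝ) := by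
    rw [← hfac]; field_simp
  rw [harith]
  simp only [Nat.add_sub_cancel]

/-- The key representation: `(-1)^k • u 0 = ∫ g_k • u^{(k)} + ∫ h • u`. -/
lemma kernel_identity (k : ℕ) (hk : 1 ≤ k) :
    ∃ h : ℝ → ℝ, ContDiff ℝ ∞ h ∧ HasCompactSupport h ∧
      ∀ u : ℝ → ℂ, ContDiff ℝ (k : ℕ∞) u →
        ((-1:ℝ)^k) • u 0 =
          (∫ x in Ioi (0:ℝ), gker k x • iteratedDeriv k u x) +
            ∫ x in Ioi (0:ℝ), h x • u x := by
  induction k, hk using Nat.le_induction with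
  | base =>
    refine ⟨deriv (gker 1), (contDiff_infty_iff_deriv.mp (gker_smooth 1)).2,
      (gker_hcs 1).deriv, fun u hu => ?_⟩
    have h := ibp_split (gker 1) u 0 (gker_smooth 1) (gker_hcs 1) (by exact_mod_cast hu)
    have h10 : gker 1 0 = 1 := by simp [gker, tbump_one]
    rw [h10, iteratedDeriv_zero] at h
    rw [h]; module
  | succ k hk1 ih =>
    obtain ⟨h, hh, hhs, hhu⟩ := ih
    -- residual kernel r
    set r : ℝ → ℝ := fun x => x ^ k / (k ! : ℝ) * deriv (⇑tbump) x with hr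
    have hrsm : ContDiff ℝ ∞ r :=
      (poly_smooth k _).mul (contDiff_infty_iff_deriv.mp tbump.contDiff).2
    have hrcs : HasCompactSupport r :=
      HasCompactSupport.mul_left (f := fun x : ℝ => x ^ k / (k ! : ℝ))
        tbump.hasCompactSupport.deriv
    have hr0 : ∀ x ∈ Ioo (-1:ℝ) 1, r x = 0 := fun x hx => by
      simp [hr, tbump_deriv_zero hx]
    obtain ⟨hr', hr'sm, hr'cs, hr'u⟩ := shift_derivs k r hrsm hrcs hr0
    have hsubcs : HasCompactSupport (fun x => hr' x - h x) := by
      have : (fun x => hr' x - h x) = (fun x => hr' x + (-h x)) :=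
        funext fun x => sub_eq_add_neg _ _
      rw [this]
      exact hr'cs.add (by
        rw [HasCompactSupport, tsupport] at *
        rwa [show (Function.support fun x => -h x) = Function.support h by
          ext x; simp [Function.support]])
    refine ⟨fun x => hr' x - h x, hr'sm.sub hh, hsubcs, fun u hu => ?_⟩
    have huk : ContDiff ℝ (k : ℕ∞) u := hu.of_le (by exact_mod_cast by omega)
    have hsplit := ibp_split (gker (k+1)) u k (gker_smooth (k+1)) (gker_hcs (k+1))
      (by exact_mod_cast hu)
    have hg0 : gker (k+1) 0 = 0 := by
      simp only [gker]
      rw [zero_pow (by omega : k + 1 - 1 ≠ 0)]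
      ring
    rw [hg0, zero_smul, neg_zero, zero_sub] at hsplit
    -- deriv (gker (k+1)) = gker k + r
    have hdsum : ∀ x : ℝ, deriv (gker (k+1)) x • iteratedDeriv k u x
        = gker k x • iteratedDeriv k u x + r x • iteratedDeriv k u x := by
      intro x; rw [gker_deriv k hk1 x, add_smul]
    have hudc : Continuous (iteratedDeriv k u) :=
      hu.continuous_iteratedDeriv k (by exact_mod_cast by omega)
    have hI1 : Integrable (fun x => gker k x • iteratedDeriv k u x) :=
      Continuous.integrable_of_hasCompactSupport
        ((gker_smooth k).continuous.smul hudc) (gker_hcs k).smul_right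
    have hI2 : Integrable (fun x => r x • iteratedDeriv k u x) :=
      Continuous.integrable_of_hasCompactSupport
        (hrsm.continuous.smul hudc) hrcs.smul_right
    have : ∫ x in Ioi (0:ℝ), deriv (gker (k+1)) x • iteratedDeriv k u x
        = (∫ x in Ioi (0:ℝ), gker k x • iteratedDeriv k u x)
          + ∫ x in Ioi (0:ℝ), r x • iteratedDeriv k u x := by
      rw [← integral_add hI1.integrableOn hI2.integrableOn]
      exact integral_congr_ae (Filter.Eventually.of_forall fun x => hdsum x)
    rw [this, hr'u u huk] at hsplit
    have hid := hhu u huk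
    have hsub : ∫ x in Ioi (0:ℝ), (fun x => hr' x - h x) x • u x
        = (∫ x in Ioi (0:ℝ), hr' x • u x) - ∫ x in Ioi (0:ℝ), h x • u x := by
      have hIa : Integrable (fun x => hr' x • u x) :=
        Continuous.integrable_of_hasCompactSupport
          (hr'sm.continuous.smul hu.continuous) hr'cs.smul_right
      have hIb : Integrable (fun x => h x • u x) :=
        Continuous.integrable_of_hasCompactSupport
          (hh.continuous.smul hu.continuous) hhs.smul_right
      rw [← integral_sub hIa.integrableOn hIb.integrableOn]
      exact integral_congr_ae (Filter.Eventually.of_forall fun x => by simp [sub_smul])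
    rw [hsub, hsplit]
    rw [pow_succ]
    linear_combination (norm := module) -hid

lemma sqrt_term {x : ℝ} (hx : 0 ≤ x) : (x ^ ((1:ℝ)/2)) ^ (2:ℕ) = x := by
  rw [← Real.rpow_natCast (x ^ ((1:ℝ)/2)) 2, ← Real.rpow_mul hx]
  norm_num

/-- One term of the Cauchy-Schwarz estimate. -/
lemma cs_term (g : ℝ → ℝ) (v : ℝ → ℂ) (hg : ContDiff ℝ ∞ g) (hgs : HasCompactSupport g)
    (hvc : Continuous v) (hv2 : MemLp v 2 (volume : Measure ℝ)) :
    ∫ x in Ioi (0:ℝ), |g x| * ‖v x‖ ≤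
      (∫ x, g x ^ 2) ^ ((1:ℝ)/2) * (∫ x, ‖v x‖ ^ 2) ^ ((1:ℝ)/2) := by
  have h2 : ENNReal.ofReal (2:ℝ) = 2 := by
    rw [ENNReal.ofReal_ofNat]
  have hconj : Real.HolderConjugate 2 2 := Real.HolderConjugate.two_two
  have hgabs : MemLp (fun x => |g x|) (ENNReal.ofReal 2) (volume.restrict (Ioi 0)) := by
    rw [h2]
    exact ((hg.continuous.abs.memLp_of_hasCompactSupport
      (hgs.comp_left (g := abs) abs_zero)).restrict _)
  have hvn : MemLp (fun x => ‖v x‖) (ENNReal.ofReal 2) (volume.restrict (Ioi 0)) := by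
    rw [h2]; exact (hv2.restrict _).norm
  have hH := integral_mul_le_Lp_mul_Lq_of_nonneg hconj
    (Eventually.of_forall fun x => abs_nonneg (g x))
    (Eventually.of_forall fun x => norm_nonneg (v x)) hgabs hvn
  have e1 : ∫ x in Ioi (0:ℝ), |g x| ^ (2:ℝ) = ∫ x in Ioi (0:ℝ), g x ^ 2 := by
    apply integral_congr_ae; filter_upwards with x
    rw [show (2:ℝ) = ((2:ℕ):ℝ) by norm_num, Real.rpow_natCast]; exact sq_abs _
  have e2 : ∫ x in Ioi (0:ℝ), ‖v x‖ ^ (2:ℝ) = ∫ x in Ioi (0:ℝ), ‖v x‖ ^ 2 := by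
    apply integral_congr_ae; filter_upwards with x
    rw [show (2:ℝ) = ((2:ℕ):ℝ) by norm_num, Real.rpow_natCast]
  rw [e1, e2] at hH
  refine hH.trans ?_
  have hgint : Integrable (fun x => g x ^ 2) := by
    apply Continuous.integrable_of_hasCompactSupport (hg.continuous.pow 2)
    exact (hgs.comp_left (g := fun t : ℝ => t^2) (zero_pow two_ne_zero) : HasCompactSupport fun x => g x ^ 2)
  have hvint : Integrable (fun x => ‖v x‖ ^ 2) :=
    (memLp_two_iff_integrable_sq_norm hvc.aestronglyMeasurable).mp hv2
  have m1 : ∫ x in Ioi (0:ℝ), g x ^ 2 ≤ ∫ x, g x ^ 2 :=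
    setIntegral_le_integral hgint (Eventually.of_forall fun x => sq_nonneg _)
  have m2 : ∫ x in Ioi (0:ℝ), ‖v x‖ ^ 2 ≤ ∫ x, ‖v x‖ ^ 2 :=
    setIntegral_le_integral hvint (Eventually.of_forall fun x => sq_nonneg _)
  have n1 : (0:ℝ) ≤ ∫ x in Ioi (0:ℝ), g x ^ 2 :=
    integral_nonneg fun x => sq_nonneg _
  have n2 : (0:ℝ) ≤ ∫ x in Ioi (0:ℝ), ‖v x‖ ^ 2 :=
    integral_nonneg fun x => sq_nonneg _
  have r1 : (∫ x in Ioi (0:ℝ), g x ^ 2) ^ ((1:ℝ)/2) ≤ (∫ x, g x ^ 2) ^ ((1:ℝ)/2) :=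
    Real.rpow_le_rpow n1 m1 (by norm_num)
  have r2 : (∫ x in Ioi (0:ℝ), ‖v x‖ ^ 2) ^ ((1:ℝ)/2) ≤ (∫ x, ‖v x‖ ^ 2) ^ ((1:ℝ)/2) :=
    Real.rpow_le_rpow n2 m2 (by norm_num)
  have p2 : (0:ℝ) ≤ (∫ x in Ioi (0:ℝ), ‖v x‖ ^ 2) ^ ((1:ℝ)/2) := Real.rpow_nonneg n2 _
  have p1 : (0:ℝ) ≤ (∫ x, g x ^ 2) ^ ((1:ℝ)/2) :=
    Real.rpow_nonneg (n1.trans m1) _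
  calc (∫ x in Ioi (0:ℝ), g x ^ 2) ^ ((1:ℝ)/2) * (∫ x in Ioi (0:ℝ), ‖v x‖ ^ 2) ^ ((1:ℝ)/2)
      ≤ (∫ x, g x ^ 2) ^ ((1:ℝ)/2) * (∫ x in Ioi (0:ℝ), ‖v x‖ ^ 2) ^ ((1:ℝ)/2) :=
        mul_le_mul_of_nonneg_right r1 p2
    _ ≤ (∫ x, g x ^ 2) ^ ((1:ℝ)/2) * (∫ x, ‖v x‖ ^ 2) ^ ((1:ℝ)/2) :=
        mul_le_mul_of_nonneg_left r2 p1


/-- Unit-scale trace inequality. -/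
lemma base_estimate (k : ℕ) (hk : 1 ≤ k) :
    ∃ Cg Ch : ℝ, 0 ≤ Cg ∧ 0 ≤ Ch ∧
      ∀ v : ℝ → ℂ, ContDiff ℝ (k : ℕ∞) v → MemLp v 2 (volume : Measure ℝ) →
        MemLp (iteratedDeriv k v) 2 (volume : Measure ℝ) →
        ‖v 0‖ ^ 2 ≤ 2 * Cg * (∫ x, ‖iteratedDeriv k v x‖ ^ 2)
          + 2 * Ch * (∫ x, ‖v x‖ ^ 2) := by
  obtain ⟨h, hh, hhs, hid⟩ := kernel_identity k hk
  refine ⟨∫ x, gker k x ^ 2, ∫ x, h x ^ 2, integral_nonneg fun x => sq_nonneg _,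
    integral_nonneg fun x => sq_nonneg _, fun v hv hv2 hvk2 => ?_⟩
  set Cg := ∫ x, gker k x ^ 2
  set Ch := ∫ x, h x ^ 2
  set Bv := ∫ x, ‖iteratedDeriv k v x‖ ^ 2
  set Av := ∫ x, ‖v x‖ ^ 2
  have hvkc : Continuous (iteratedDeriv k v) :=
    hv.continuous_iteratedDeriv k (by exact_mod_cast le_rfl)
  -- norm bound from the identity
  have hnorm : ‖v 0‖ ≤ (∫ x in Ioi (0:ℝ), |gker k x| * ‖iteratedDeriv k v x‖)
      + ∫ x in Ioi (0:ℝ), |h x| * ‖v x‖ := by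
    have h1 : ‖v 0‖ = ‖((-1:ℝ)^k) • v 0‖ := by
      rw [norm_smul]; simp
    rw [h1, hid v hv]
    refine (norm_add_le _ _).trans ?_
    have b1 : ‖∫ x in Ioi (0:ℝ), gker k x • iteratedDeriv k v x‖
        ≤ ∫ x in Ioi (0:ℝ), |gker k x| * ‖iteratedDeriv k v x‖ := by
      refine (norm_integral_le_integral_norm _).trans_eq ?_
      apply integral_congr_ae; filter_upwards with x
      rw [norm_smul, Real.norm_eq_abs]
    have b2 : ‖∫ x in Ioi (0:ℝ), h x • v x‖ ≤ ∫ x in Ioi (0:ℝ), |h x| * ‖v x‖ := by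
      refine (norm_integral_le_integral_norm _).trans_eq ?_
      apply integral_congr_ae; filter_upwards with x
      rw [norm_smul, Real.norm_eq_abs]
    exact add_le_add b1 b2
  have c1 := cs_term (gker k) (iteratedDeriv k v) (gker_smooth k) (gker_hcs k) hvkc hvk2
  have c2 := cs_term h v hh hhs hv.continuous hv2
  have hBv : (0:ℝ) ≤ Bv := integral_nonneg fun x => sq_nonneg _
  have hAv : (0:ℝ) ≤ Av := integral_nonneg fun x => sq_nonneg _
  have hCg : (0:ℝ) ≤ Cg := integral_nonneg fun x => sq_nonneg _
  have hCh : (0:ℝ) ≤ Ch := integral_nonneg fun x => sq_nonneg _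
  have key : ‖v 0‖ ≤ Cg ^ ((1:ℝ)/2) * Bv ^ ((1:ℝ)/2) + Ch ^ ((1:ℝ)/2) * Av ^ ((1:ℝ)/2) :=
    hnorm.trans (add_le_add c1 c2)
  have hsq : ‖v 0‖ ^ 2 ≤ (Cg ^ ((1:ℝ)/2) * Bv ^ ((1:ℝ)/2) + Ch ^ ((1:ℝ)/2) * Av ^ ((1:ℝ)/2)) ^ 2 :=
    pow_le_pow_left₀ (norm_nonneg _) key 2
  have e1 := sqrt_term hCg; have e2 := sqrt_term hCh
  have e3 := sqrt_term hBv; have e4 := sqrt_term hAv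
  nlinarith [sq_nonneg (Cg ^ ((1:ℝ)/2) * Bv ^ ((1:ℝ)/2) - Ch ^ ((1:ℝ)/2) * Av ^ ((1:ℝ)/2)),
    mul_pow (Cg ^ ((1:ℝ)/2)) (Bv ^ ((1:ℝ)/2)) 2, mul_pow (Ch ^ ((1:ℝ)/2)) (Av ^ ((1:ℝ)/2)) 2]

lemma pow_bound (a : ℝ) (k : ℕ) (ha : 0 ≤ a) : (1+a)^k ≤ 2^k * (1 + a^k) := by
  rcases le_total a 1 with h|h
  · calc (1+a)^k ≤ 2^k := pow_le_pow_left₀ (by positivity) (by linarith) k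
      _ ≤ 2^k * (1+a^k) := le_mul_of_one_le_right (by positivity)
          (by nlinarith [pow_nonneg ha k])
  · calc (1+a)^k ≤ (2*a)^k := pow_le_pow_left₀ (by positivity) (by linarith) k
      _ = 2^k * a^k := mul_pow 2 a k
      _ ≤ 2^k*(1+a^k) := by nlinarith [pow_pos (show (0:ℝ) < 2 by norm_num) k]

/-- The pointwise trace estimate: there is a constant `C(k)` depending only on `k ≥ 1`
such that for every `f` with `f, f^{(k)} ∈ L²(ℝ)` and every `λ ∈ ℝ`,
`|f(0)|² (1+λ²)^{k-1/2} ≤ C(k) (‖f‖²_{L²} + ‖f^{(k)}‖²_{L²} + λ^{2k} ‖f‖²_{L²})`. -/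
theorem trace_estimate (k : ℕ) (hk : 1 ≤ k) :
    ∃ C : ℝ, 0 < C ∧ ∀ (f : ℝ → ℂ) (lam : ℝ),
      ContDiff ℝ (k : ℕ∞) f →
      MemLp f 2 (volume : Measure ℝ) →
      MemLp (iteratedDeriv k f) 2 (volume : Measure ℝ) →
      ‖f 0‖ ^ 2 * (1 + lam ^ 2) ^ ((k : ℝ) - 1 / 2) ≤
        C * ((∫ t : ℝ, ‖f t‖ ^ 2) + (∫ t : ℝ, ‖iteratedDeriv k f t‖ ^ 2) +
              lam ^ (2 * k) * ∫ t : ℝ, ‖f t‖ ^ 2) := by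
  obtain ⟨Cg, Ch, hCg, hCh, hbase⟩ := base_estimate k hk
  refine ⟨2*Cg + 2*Ch*2^k + 1, by positivity, fun f lam hf hf2 hfk2 => ?_⟩
  set A := ∫ t : ℝ, ‖f t‖ ^ 2 with hA
  set B := ∫ t : ℝ, ‖iteratedDeriv k f t‖ ^ 2 with hB
  have hA0 : 0 ≤ A := integral_nonneg fun x => sq_nonneg _
  have hB0 : 0 ≤ B := integral_nonneg fun x => sq_nonneg _
  set s : ℝ := 1 + lam^2 with hs
  have hs1 : (1:ℝ) ≤ s := by nlinarith [sq_nonneg lam]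
  have hs0 : (0:ℝ) < s := by linarith
  set μ := Real.sqrt s with hμ
  have hμsq : μ^2 = s := Real.sq_sqrt hs0.le
  have hμpos : 0 < μ := Real.sqrt_pos.mpr hs0
  have hμ1 : 1 ≤ μ := by nlinarith
  set c := μ⁻¹ with hc
  have hcpos : 0 < c := by positivity
  have hcne : c ≠ 0 := hcpos.ne'
  set u : ℝ → ℂ := fun x => f (c * x) with hu
  -- smoothness of u
  have hcd : ContDiff ℝ (k : ℕ∞) u :=
    hf.comp (contDiff_const.mul contDiff_id)
  -- derivative formula
  have hkd : iteratedDeriv k u = fun x => c ^ k • iteratedDeriv k f (c * x) :=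
    iteratedDeriv_comp_const_smul hf c
  -- square-integrability of f, f^{(k)}
  have hfA : Integrable (fun t => ‖f t‖^2) :=
    (memLp_two_iff_integrable_sq_norm hf.continuous.aestronglyMeasurable).mp hf2
  have hfB : Integrable (fun t => ‖iteratedDeriv k f t‖^2) :=
    (memLp_two_iff_integrable_sq_norm
      (hf.continuous_iteratedDeriv k (by exact_mod_cast le_rfl)).aestronglyMeasurable).mp hfk2
  -- MemLp of u
  have hu2 : MemLp u 2 (volume : Measure ℝ) := by
    rw [memLp_two_iff_integrable_sq_norm (hcd.continuous.aestronglyMeasurable)]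
    exact hfA.comp_mul_left' hcne
  have huk2 : MemLp (iteratedDeriv k u) 2 (volume : Measure ℝ) := by
    rw [memLp_two_iff_integrable_sq_norm
      ((hcd.continuous_iteratedDeriv k (by exact_mod_cast le_rfl)).aestronglyMeasurable)]
    rw [hkd]
    have : (fun x => ‖c ^ k • iteratedDeriv k f (c * x)‖^2)
        = fun x => (c^k)^2 * ‖iteratedDeriv k f (c * x)‖^2 := by
      funext x
      rw [norm_smul, mul_pow, Real.norm_eq_abs, sq_abs]
    rw [this]
    exact ((hfB.comp_mul_left' hcne).const_mul _)
  -- integrals of u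
  have hintu : ∫ x, ‖u x‖^2 = μ * A := by
    have := Measure.integral_comp_mul_left (fun y => ‖f y‖^2) c
    simp only [smul_eq_mul] at this
    rw [hu]
    simp only []
    rw [this, hc, inv_inv, abs_of_pos hμpos, hA]
  have hintuk : ∫ x, ‖iteratedDeriv k u x‖^2 = (c^k)^2 * (μ * B) := by
    rw [hkd]
    have e : (fun x => ‖c ^ k • iteratedDeriv k f (c * x)‖^2)
        = fun x => (c^k)^2 * ‖iteratedDeriv k f (c * x)‖^2 := by
      funext x; rw [norm_smul, mul_pow, Real.norm_eq_abs, sq_abs]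
    calc ∫ x, ‖c ^ k • iteratedDeriv k f (c * x)‖^2
        = ∫ x, (c^k)^2 * ‖iteratedDeriv k f (c * x)‖^2 := by rw [e]
      _ = (c^k)^2 * ∫ x, ‖iteratedDeriv k f (c * x)‖^2 := integral_const_mul _ _
      _ = (c^k)^2 * (μ * B) := by
          have := Measure.integral_comp_mul_left (fun y => ‖iteratedDeriv k f y‖^2) c
          simp only [smul_eq_mul] at this
          rw [this, hc, inv_inv, abs_of_pos hμpos, hB]
  -- base estimate applied to u
  have hbu := hbase u hcd hu2 huk2
  rw [hintu, hintuk] at hbu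
  have hu0 : u 0 = f 0 := by rw [hu]; simp
  rw [hu0] at hbu
  -- power identity
  have hpowid : s ^ ((k : ℝ) - 1/2) = μ ^ (2*k - 1) := by
    have h1 : ((k : ℝ) - 1/2) = ((2*k-1 : ℕ) : ℝ) * (1/2) := by
      push_cast [Nat.cast_sub (by omega : 1 ≤ 2*k)]
      ring
    rw [h1, mul_comm ((2*k-1 : ℕ) : ℝ) ((1:ℝ)/2), Real.rpow_mul hs0.le,
      ← Real.sqrt_eq_rpow, Real.rpow_natCast]
  -- μ cancellation identities
  have hmul : μ * μ ^ (2*k-1) = μ ^ (2*k) := by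
    conv_rhs => rw [show 2*k = 2*k-1+1 by omega]
    rw [_root_.pow_succ']
  have hmupow : μ * μ ^ (2*k-1) = s ^ k := by
    rw [hmul, pow_mul, hμsq]
  have hcancel : (c^k)^2 * μ * μ ^ (2*k-1) = 1 := by
    rw [hc, mul_assoc, hmul, ← pow_mul, Nat.mul_comm k 2, ← mul_pow,
      inv_mul_cancel₀ hμpos.ne', one_pow]
  have hskb : s ^ k ≤ 2^k * (1 + lam ^ (2*k)) := by
    rw [hs, pow_mul]
    exact pow_bound (lam^2) k (sq_nonneg lam)
  -- final arithmetic
  have hμp0 : (0:ℝ) < μ ^ (2*k-1) := pow_pos hμpos _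
  have step : ‖f 0‖^2 * μ ^ (2*k-1) ≤ 2*Cg*B + 2*Ch*(s^k) * A := by
    have := mul_le_mul_of_nonneg_right hbu hμp0.le
    calc ‖f 0‖^2 * μ ^ (2*k-1)
        ≤ (2 * Cg * ((c^k)^2 * (μ * B)) + 2 * Ch * (μ * A)) * μ ^ (2*k-1) := this
      _ = 2*Cg*B * ((c^k)^2 * μ * μ^(2*k-1)) + 2*Ch*A*(μ * μ^(2*k-1)) := by ring
      _ = 2*Cg*B + 2*Ch*(s^k) * A := by rw [hcancel, hmupow]; ring
  rw [hpowid]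
  have hfin : 2*Cg*B + 2*Ch*(s^k) * A
      ≤ (2*Cg + 2*Ch*2^k + 1) * (A + B + lam ^ (2*k) * A) := by
    have h2k : (1:ℝ) ≤ 2^k := one_le_pow₀ (by norm_num)
    have hlam : (0:ℝ) ≤ lam ^ (2*k) := by rw [pow_mul]; positivity
    have h1 : 2*Ch*(s^k) * A ≤ 2*Ch*(2^k * (1 + lam ^ (2*k))) * A := by
      apply mul_le_mul_of_nonneg_right _ hA0
      apply mul_le_mul_of_nonneg_left hskb (by positivity)
    have h1' : 2*Ch*(2^k * (1 + lam ^ (2*k))) * A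
        = 2*Ch*2^k*A + 2*Ch*2^k*(lam^(2*k))*A := by ring
    have hexp : (2*Cg + 2*Ch*2^k + 1) * (A + B + lam ^ (2*k) * A)
        = 2*Cg*B + (2*Ch*2^k*A + 2*Ch*2^k*(lam^(2*k))*A)
          + (2*Cg*A + 2*Cg*(lam^(2*k))*A + 2*Ch*2^k*B + A + B + lam^(2*k)*A) := by ring
    have hn1 : (0:ℝ) ≤ 2*Cg*A :=
      mul_nonneg (mul_nonneg (by norm_num) hCg) hA0
    have hn2 : (0:ℝ) ≤ 2*Cg*(lam^(2*k))*A :=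
      mul_nonneg (mul_nonneg (mul_nonneg (by norm_num) hCg) hlam) hA0
    have hn3 : (0:ℝ) ≤ 2*Ch*2^k*B :=
      mul_nonneg (mul_nonneg (mul_nonneg (by norm_num) hCh) (by positivity)) hB0
    have hn4 : (0:ℝ) ≤ lam^(2*k)*A := mul_nonneg hlam hA0
    linarith [h1, h1', hexp]
  linarith
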